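/- Small pairwise intersection of concentrated subsets: Let n be a positive integer, let α ∈ (0, 1/2), let u > 0, and let x, y ∈ ℝⁿ with ‖x − y‖₂ ≥ 2u. Suppose S_x and S_y are finite subsets of ℝⁿ such that for every unit vector v ∈ ℝⁿ, the number of points z ∈ S_x with |⟨v, z − x⟩| ≥ u is at most (α/10)·|S_x|, and the number of points z ∈ S_y with |⟨v, z − y⟩| ≥ u is at most (α/10)·|S_y|. Then |S_x ∩ S_y| ≤ (α/10)·(|S_x| + |S_y|). -/

import Mathlib

open Finset

open Classical in
/-- Small pairwise intersection of concentrated subsets. -/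
theorem stmt_2 (n : ℕ) (hn : 0 < n) (α u : ℝ) (hα0 : 0 < α) (hα : α < 1 / 2) (hu : 0 < u)
    (x y : EuclideanSpace ℝ (Fin n)) (hxy : 2 * u ≤ ‖x - y‖)
    (Sx Sy : Finset (EuclideanSpace ℝ (Fin n)))
    (hx : ∀ v : EuclideanSpace ℝ (Fin n), ‖v‖ = 1 →
      ((Sx.filter fun z => u ≤ |(inner ℝ v (z - x) : ℝ)|).card : ℝ) ≤ (α / 10) * (Sx.card : ℝ))
    (hy : ∀ v : EuclideanSpace ℝ (Fin n), ‖v‖ = 1 →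
      ((Sy.filter fun z => u ≤ |(inner ℝ v (z - y) : ℝ)|).card : ℝ) ≤ (α / 10) * (Sy.card : ℝ)) :
    ((Sx ∩ Sy).card : ℝ) ≤ (α / 10) * ((Sx.card : ℝ) + (Sy.card : ℝ)) := by
  have hd : (0 : ℝ) < ‖x - y‖ := lt_of_lt_of_le (by linarith) hxy
  set d := ‖x - y‖ with hdd
  set v : EuclideanSpace ℝ (Fin n) := d⁻¹ • (x - y) with hv
  have hvnorm : ‖v‖ = 1 := by
    rw [hv, norm_smul, norm_inv, Real.norm_eq_abs, abs_of_pos hd]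
    rw [← hdd]
    field_simp
  have key : ∀ z ∈ Sx ∩ Sy,
      u ≤ |(inner ℝ v (z - x) : ℝ)| ∨ u ≤ |(inner ℝ v (z - y) : ℝ)| := by
    intro z _
    by_contra h
    push_neg at h
    obtain ⟨h1, h2⟩ := h
    have hdiff : (inner ℝ v (z - x) : ℝ) - (inner ℝ v (z - y) : ℝ) = -d := by
      rw [← inner_sub_right]
      have : (z - x) - (z - y) = -(x - y) := by abel
      rw [this, inner_neg_right, hv, real_inner_smul_left, real_inner_self_eq_norm_sq]
      field_simp [hdd]
      ring
    have : d ≤ |(inner ℝ v (z - x) : ℝ)| + |(inner ℝ v (z - y) : ℝ)| := by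
      calc d = |(inner ℝ v (z - x) : ℝ) - (inner ℝ v (z - y) : ℝ)| := by
            rw [hdiff, abs_neg, abs_of_pos hd]
        _ ≤ _ := abs_sub _ _
    linarith
  have hsub : Sx ∩ Sy ⊆
      (Sx.filter fun z => u ≤ |(inner ℝ v (z - x) : ℝ)|) ∪
      (Sy.filter fun z => u ≤ |(inner ℝ v (z - y) : ℝ)|) := by
    intro z hz
    rcases key z hz with h | h
    · exact Finset.mem_union_left _ (Finset.mem_filter.mpr ⟨(Finset.mem_inter.mp hz).1, h⟩)
    · exact Finset.mem_union_right _ (Finset.mem_filter.mpr ⟨(Finset.mem_inter.mp hz).2, h⟩)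
  have := Finset.card_le_card hsub
  have hcu := Finset.card_union_le
    (Sx.filter fun z => u ≤ |(inner ℝ v (z - x) : ℝ)|)
    (Sy.filter fun z => u ≤ |(inner ℝ v (z - y) : ℝ)|)
  have hx' := hx v hvnorm
  have hy' := hy v hvnorm
  have h1 : ((Sx ∩ Sy).card : ℝ) ≤
      ((Sx.filter fun z => u ≤ |(inner ℝ v (z - x) : ℝ)|).card : ℝ) +
      ((Sy.filter fun z => u ≤ |(inner ℝ v (z - y) : ℝ)|).card : ℝ) := by
    exact_mod_cast le_trans this hcu
  linarith [h1, hx', hy']
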